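/- The sequence p_n(1/e) is strictly decreasing in n and converges to 1/e; in particular p_n(1/e) > 1/e for every n ≥ 1, so the 1/e-strategy wins with probability strictly above 1/e against every number of items. -/

import Mathlib

open Finset Real Filter

noncomputable def pwin (n : ℕ) (x : ℝ) : ℝ :=
  1 - x - ∑ k ∈ Finset.Icc 2 n, (1 - x) ^ k / ((k : ℝ) * ((k : ℝ) - 1))

lemma pwin_key (x : ℝ) (hx0 : 0 < x) (hx1 : x < 1) (hlog : Real.log x = -1) :
    (∀ n : ℕ, 1 ≤ n → pwin (n + 1) x < pwin n x) ∧
    Tendsto (fun n : ℕ => pwin n x) atTop (nhds x) ∧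
    (∀ n : ℕ, 1 ≤ n → x < pwin n x) := by
  have ht0 : 0 < 1 - x := by linarith
  -- strict decrease
  have hdec : ∀ n : ℕ, 1 ≤ n → pwin (n + 1) x < pwin n x := by
    intro n hn
    have h2 : 2 ≤ n + 1 := by omega
    have hn1 : (1:ℝ) ≤ (n:ℝ) := by exact_mod_cast hn
    unfold pwin
    rw [Finset.sum_Icc_succ_top h2]
    have hpos : 0 < (1 - x) ^ (n+1) / ((↑(n+1) : ℝ) * ((↑(n+1):ℝ) - 1)) := by
      apply div_pos (pow_pos ht0 _)
      push_cast
      nlinarith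
    linarith
  have habs : |1 - x| < 1 := by rw [abs_of_pos ht0]; linarith
  have h1 : HasSum (fun n : ℕ => (1 - x) ^ (n + 1) / (n + 1)) 1 := by
    have h := Real.hasSum_pow_div_log_of_abs_lt_one habs
    have hxe : (1 : ℝ) - (1 - x) = x := by ring
    rw [hxe, hlog] at h
    simpa using h
  have h2 : HasSum (fun n : ℕ => (1 - x) ^ (n + 2) / (n + 2)) (1 - (1 - x)) := by
    have h := (hasSum_nat_add_iff'
      (f := fun n : ℕ => (1 - x) ^ (n + 1) / (n + 1)) (g := 1) 1).mpr h1
    simp only [Finset.range_one, Finset.sum_singleton] at h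
    convert h using 2 with n
    · rfl
    · push_cast; ring_nf
    · norm_num
  have h3 : HasSum (fun n : ℕ => (1 - x) * ((1 - x) ^ (n + 1) / (n + 1))) (1 - x) := by
    simpa using h1.mul_left (1 - x)
  have hg : HasSum (fun n : ℕ =>
      (1 - x) ^ (n + 2) / ((↑(n + 2) : ℝ) * ((↑(n + 2) : ℝ) - 1))) (1 - 2 * x) := by
    have h := h3.sub h2
    have heq : (fun n : ℕ => (1 - x) ^ (n + 2) / ((↑(n + 2) : ℝ) * ((↑(n + 2) : ℝ) - 1)))
        = fun n : ℕ => (1 - x) * ((1 - x) ^ (n + 1) / (n + 1)) - (1 - x) ^ (n + 2) / (n + 2) := by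
      funext n
      have hn1 : ((n:ℝ) + 1) ≠ 0 := by positivity
      have hn2 : ((n:ℝ) + 2) ≠ 0 := by positivity
      push_cast
      rw [show ((n:ℝ) + 2 - 1) = (n:ℝ) + 1 by ring]
      field_simp
      ring
    rw [heq]
    convert h using 1
    · rfl
    ring
  have hsum : ∀ n : ℕ, (∑ k ∈ Finset.Icc 2 n, (1 - x) ^ k / ((k : ℝ) * ((k : ℝ) - 1)))
      = ∑ j ∈ Finset.range (n - 1),
          (1 - x) ^ (j + 2) / ((↑(j + 2) : ℝ) * ((↑(j + 2) : ℝ) - 1)) := by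
    intro n
    induction n with
    | zero => simp
    | succ m ih =>
      rcases Nat.eq_zero_or_pos m with hm | hm
      · subst hm; simp
      · have h2m : 2 ≤ m + 1 := by omega
        rw [Finset.sum_Icc_succ_top h2m, ih]
        have h1m : m + 1 - 1 = (m - 1) + 1 := by omega
        have h2m' : m - 1 + 2 = m + 1 := by omega
        rw [h1m, Finset.sum_range_succ, h2m']
  have hS : Tendsto (fun n : ℕ => ∑ k ∈ Finset.Icc 2 n, (1 - x) ^ k / ((k : ℝ) * ((k : ℝ) - 1)))
      atTop (nhds (1 - 2 * x)) := by
    have h := hg.tendsto_sum_nat.comp (tendsto_sub_atTop_nat 1)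
    simpa only [Function.comp_def, ← hsum] using h
  have hlim : Tendsto (fun n : ℕ => pwin n x) atTop (nhds x) := by
    have h := hS.const_sub (1 - x)
    have he : (1 - x) - (1 - 2 * x) = x := by ring
    rw [he] at h
    exact h.congr fun n => rfl
  refine ⟨hdec, hlim, ?_⟩
  have hmono : ∀ n : ℕ, 1 ≤ n → ∀ m : ℕ, n ≤ m → pwin m x ≤ pwin n x := by
    intro n hn m hm
    induction m with
    | zero => omega
    | succ k ih =>
      rcases Nat.lt_or_ge n (k + 1) with h | h
      · have hk : n ≤ k := by omega
        exact le_trans (le_of_lt (hdec k (by omega))) (ih hk)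
      · have hnk : n = k + 1 := by omega
        rw [hnk]
  intro n hn
  have hge : x ≤ pwin (n + 1) x := by
    apply le_of_tendsto hlim
    filter_upwards [eventually_ge_atTop (n + 1)] with m hm
    exact hmono (n + 1) (by omega) m hm
  exact lt_of_le_of_lt hge (hdec n hn)

theorem stmt5 :
    (∀ n : ℕ, 1 ≤ n → pwin (n + 1) (Real.exp 1)⁻¹ < pwin n (Real.exp 1)⁻¹) ∧
    Tendsto (fun n : ℕ => pwin n (Real.exp 1)⁻¹) atTop (nhds (Real.exp 1)⁻¹) ∧
    (∀ n : ℕ, 1 ≤ n → (Real.exp 1)⁻¹ < pwin n (Real.exp 1)⁻¹) := by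
  apply pwin_key
  · positivity
  · rw [inv_lt_one_iff₀]
    right
    have := Real.add_one_lt_exp (x := 1) one_ne_zero
    linarith
  · rw [Real.log_inv, Real.log_exp]
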